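/- For any a ≥ 0, either e(a) ≥ 0 or e(a) = -∞. (That is, if the Gross-Pitaevskii energy infimum is negative, it is -∞.) -/

import Mathlib

open MeasureTheory Real Filter

noncomputable section

abbrev E2 : Type := EuclideanSpace ℝ (Fin 2)

/-- squared norm of the gradient -/
def gradSq (u : E2 → ℝ) (x : E2) : ℝ := ‖fderiv ℝ u x‖ ^ 2

/-- the Laplacian as the sum of second partial derivatives -/
def lap (u : E2 → ℝ) (x : E2) : ℝ :=
  ∑ i : Fin 2, fderiv ℝ (fun y => fderiv ℝ u y (EuclideanSpace.single i 1)) x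
      (EuclideanSpace.single i 1)

/-- membership in H¹(ℝ²) together with L⁴ (which follows by Sobolev embedding) -/
def IsH1 (u : E2 → ℝ) : Prop :=
  Differentiable ℝ u ∧ Integrable (fun x => u x ^ 2) ∧
    Integrable (gradSq u) ∧ Integrable (fun x => u x ^ 4)

/-- `Q` is the (unique) positive radial H¹ solution of `-ΔQ + Q - Q³ = 0` in ℝ² -/
def IsGroundState (Q : E2 → ℝ) : Prop :=
  ContDiff ℝ 2 Q ∧ (∀ x, 0 < Q x) ∧ (∀ x y : E2, ‖x‖ = ‖y‖ → Q x = Q y) ∧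
    IsH1 Q ∧ ∀ x, -lap Q x + Q x - Q x ^ 3 = 0

/-- the space 𝓗 : H¹ functions with finite potential energy -/
def InH (V : E2 → ℝ) (u : E2 → ℝ) : Prop :=
  IsH1 u ∧ Integrable (fun x => V x * u x ^ 2)

/-- the Gross–Pitaevskii functional -/
def Ea (V : E2 → ℝ) (a : ℝ) (u : E2 → ℝ) : ℝ :=
  (∫ x, gradSq u x) + (∫ x, V x * u x ^ 2) - a / 2 * (∫ x, u x ^ 4)

/-- a minimizer of the GP functional on the unit L² sphere of 𝓗 -/
def IsMinimizer (V : E2 → ℝ) (a : ℝ) (u : E2 → ℝ) : Prop :=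
  InH V u ∧ (∫ x, u x ^ 2) = 1 ∧
    ∀ v, InH V v → (∫ x, v x ^ 2) = 1 → Ea V a u ≤ Ea V a v

/-- the GP ground-state energy, with values in ℝ ∪ {±∞} -/
def gpE (V : E2 → ℝ) (a : ℝ) : EReal :=
  sInf {y : EReal | ∃ u, InH V u ∧ (∫ x, u x ^ 2) = 1 ∧ y = (Ea V a u : EReal)}

namespace Stmt5Aux
open Metric


lemma finrank_E2 : Module.finrank ℝ E2 = 2 := by
  simp [E2]

lemma integral_comp_affine (F : E2 → ℝ) (c0 : E2) {t : ℝ} (ht : 0 < t) :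
    (∫ x : E2, F (c0 + t • x)) = (t ^ 2)⁻¹ * ∫ x, F x := by
  have h1 : (∫ x : E2, F (c0 + t • x)) = |(t ^ Module.finrank ℝ E2)⁻¹| • ∫ y, F (c0 + y) :=
    MeasureTheory.Measure.integral_comp_smul volume (fun y => F (c0 + y)) t
  rw [h1, MeasureTheory.integral_add_left_eq_self F c0, finrank_E2, smul_eq_mul,
    abs_of_pos (by positivity)]

lemma integrable_comp_affine {F : E2 → ℝ} (hF : Integrable F) (c0 : E2) {t : ℝ} (ht : 0 < t) :
    Integrable (fun x : E2 => F (c0 + t • x)) :=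
  (hF.comp_add_left c0).comp_smul ht.ne'

lemma fderiv_affine_mul (F : E2 → ℝ) (hF : Differentiable ℝ F) (c0 : E2) (t s : ℝ) (x : E2) :
    fderiv ℝ (fun y => s * F (c0 + t • y)) x = (s * t) • fderiv ℝ F (c0 + t • x) := by
  have h1 : HasFDerivAt (fun y : E2 => c0 + t • y) (t • ContinuousLinearMap.id ℝ E2) x :=
    ((hasFDerivAt_id x).const_smul t).const_add c0
  have h2 : HasFDerivAt (fun y : E2 => F (c0 + t • y))
      ((fderiv ℝ F (c0 + t • x)).comp (t • ContinuousLinearMap.id ℝ E2)) x :=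
    ((hF (c0 + t • x)).hasFDerivAt).comp x h1
  have h3 := h2.const_mul s
  rw [h3.fderiv]
  ext y
  simp [ContinuousLinearMap.smul_apply, ContinuousLinearMap.comp_apply, _root_.map_smul, smul_eq_mul]
  ring

lemma gradSq_affine_mul (F : E2 → ℝ) (hF : Differentiable ℝ F) (c0 : E2) {t s : ℝ}
    (ht : 0 < t) (hs : 0 < s) (x : E2) :
    gradSq (fun y => s * F (c0 + t • y)) x = (s * t) ^ 2 * gradSq F (c0 + t • x) := by
  rw [gradSq, gradSq, fderiv_affine_mul F hF c0 t s x, norm_smul, Real.norm_eq_abs, mul_pow,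
    sq_abs]

def bump2 : ContDiffBump (0 : E2) := ⟨1, 2, by norm_num, by norm_num⟩

lemma bump2_diff : Differentiable ℝ bump2 := (bump2.contDiff (n := (⊤:ℕ∞))).differentiable (by simp)

def chi (n : ℕ) (x : E2) : ℝ := bump2 ((((n : ℝ) + 1))⁻¹ • x)

lemma npos (n : ℕ) : (0:ℝ) < (n:ℝ) + 1 := by positivity

lemma chi_eq (n : ℕ) : chi n = fun x => (1:ℝ) * bump2 ((0:E2) + (((n:ℝ)+1))⁻¹ • x) := by
  funext x; simp [chi]

lemma chi_diff (n : ℕ) : Differentiable ℝ (chi n) :=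
  bump2_diff.comp (by fun_prop)

lemma chi_cont (n : ℕ) : Continuous (chi n) := (chi_diff n).continuous

lemma chi_nonneg (n : ℕ) (x : E2) : 0 ≤ chi n x := bump2.nonneg

lemma chi_le_one (n : ℕ) (x : E2) : chi n x ≤ 1 := bump2.le_one

lemma chi_one (n : ℕ) (x : E2) (h : ‖x‖ ≤ (n:ℝ) + 1) : chi n x = 1 := by
  refine bump2.one_of_mem_closedBall ?_
  have h1 : ‖(((n : ℝ) + 1))⁻¹ • x‖ ≤ 1 := by
    rw [norm_smul, Real.norm_eq_abs, abs_of_pos (by positivity : (0:ℝ) < (((n:ℝ)+1))⁻¹)]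
    rw [inv_mul_le_one₀ (npos n)]
    simpa using h
  simpa [mem_closedBall, dist_zero_right, bump2] using h1

lemma chi_supp {n : ℕ} {x : E2} (h : chi n x ≠ 0) : ‖x‖ < 2 * ((n:ℝ) + 1) := by
  have h1 : (((n : ℝ) + 1))⁻¹ • x ∈ Function.support bump2 := h
  rw [bump2.support_eq] at h1
  have h2 : ‖(((n : ℝ) + 1))⁻¹ • x‖ < 2 := by simpa [mem_ball, dist_zero_right, bump2] using h1
  rw [norm_smul, Real.norm_eq_abs, abs_of_pos (by positivity : (0:ℝ) < (((n:ℝ)+1))⁻¹)] at h2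
  have := (inv_mul_lt_iff₀ (npos n)).1 h2
  linarith

lemma exists_chi_bound : ∃ C : ℝ, 0 ≤ C ∧ ∀ (n : ℕ) (x : E2), ‖fderiv ℝ (chi n) x‖ ≤ C := by
  obtain ⟨C, hC⟩ := (bump2.hasCompactSupport.fderiv (𝕜 := ℝ)).exists_bound_of_continuous
    ((bump2.contDiff (n := (⊤:ℕ∞))).continuous_fderiv (by simp))
  refine ⟨C, le_trans (norm_nonneg _) (hC 0), fun n x => ?_⟩
  have h1 : fderiv ℝ (chi n) x
      = ((1:ℝ) * (((n:ℝ)+1))⁻¹) • fderiv ℝ (⇑bump2) ((0:E2) + (((n:ℝ)+1))⁻¹ • x) := by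
    rw [chi_eq n]
    exact fderiv_affine_mul _ bump2_diff _ _ _ x
  rw [h1, norm_smul, Real.norm_eq_abs, one_mul,
    abs_of_pos (by positivity : (0:ℝ) < (((n:ℝ)+1))⁻¹)]
  have h2 : (((n:ℝ)+1))⁻¹ ≤ 1 := by
    rw [inv_le_one_iff₀]; right; simp
  calc (((n:ℝ)+1))⁻¹ * ‖fderiv ℝ (⇑bump2) ((0:E2) + (((n:ℝ)+1))⁻¹ • x)‖
      ≤ 1 * C := by
        apply mul_le_mul h2 (hC _) (norm_nonneg _) zero_le_one
    _ = C := one_mul C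

lemma chiMul_eventuallyEq (u : E2 → ℝ) (n : ℕ) (x : E2) (hx : ‖x‖ < (n:ℝ)+1) :
    (fun y => chi n y * u y) =ᶠ[nhds x] u := by
  have hmem : Metric.ball (0:E2) ((n:ℝ)+1) ∈ nhds x :=
    Metric.isOpen_ball.mem_nhds (by simpa [mem_ball, dist_zero_right] using hx)
  filter_upwards [hmem] with y hy
  rw [chi_one n y (le_of_lt (by simpa [mem_ball, dist_zero_right] using hy)), one_mul]


lemma ev_one (u : E2 → ℝ) (x : E2) :
    ∀ᶠ n : ℕ in atTop, ‖x‖ < (n:ℝ) + 1 := by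
  filter_upwards [eventually_ge_atTop ⌈‖x‖⌉₊] with n hn
  have h1 : ‖x‖ ≤ (⌈‖x‖⌉₊ : ℝ) := Nat.le_ceil _
  have h2 : ((⌈‖x‖⌉₊ : ℕ) : ℝ) ≤ (n : ℝ) := by exact_mod_cast hn
  linarith

lemma truncation (u : E2 → ℝ) (hdiff : Differentiable ℝ u)
    (hL2 : Integrable (fun x => u x ^ 2))
    (hgrad : Integrable (gradSq u)) (hL4 : Integrable (fun x => u x ^ 4))
    (hmass : (∫ x, u x ^ 2) = 1) (a : ℝ)
    (hc : (∫ x, gradSq u x) - a / 2 * (∫ x, u x ^ 4) < 0) :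
    ∃ n : ℕ, (1:ℝ)/2 < (∫ x, (chi n x * u x) ^ 2) ∧
      (∫ x, gradSq (fun y => chi n y * u y) x) / (∫ x, (chi n x * u x) ^ 2)
        - a / 2 * ((∫ x, (chi n x * u x) ^ 4) / (∫ x, (chi n x * u x) ^ 2) ^ 2) < 0 ∧
      Integrable (fun x => (chi n x * u x) ^ 2) ∧
      Integrable (gradSq (fun y => chi n y * u y)) ∧
      Integrable (fun x => (chi n x * u x) ^ 4) := by
  obtain ⟨C, hC0, hC⟩ := exists_chi_bound
  set φ : ℕ → E2 → ℝ := fun n x => chi n x * u x with hφ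
  have hφdiff : ∀ n, Differentiable ℝ (fun y => chi n y * u y) :=
    fun n => (chi_diff n).mul hdiff
  have hφcont : ∀ n, Continuous (fun x => chi n x * u x) := fun n => (hφdiff n).continuous
  have habs : ∀ n x, |chi n x| ≤ 1 := fun n x => by
    rw [abs_of_nonneg (chi_nonneg n x)]; exact chi_le_one n x
  have hsqle : ∀ n x, (chi n x * u x) ^ 2 ≤ u x ^ 2 := by
    intro n x
    have h1 := chi_nonneg n x
    have h2 := chi_le_one n x
    rw [mul_pow]
    have h3 : chi n x ^ 2 ≤ 1 := pow_le_one₀ h1 h2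
    nlinarith [sq_nonneg (u x)]
  have h4le : ∀ n x, (chi n x * u x) ^ 4 ≤ u x ^ 4 := by
    intro n x
    have h1 := chi_nonneg n x
    have h2 := chi_le_one n x
    rw [mul_pow]
    have h3 : chi n x ^ 4 ≤ 1 := pow_le_one₀ h1 h2
    have h5 : u x ^ 4 = (u x ^ 2) ^ 2 := by ring
    nlinarith [sq_nonneg (u x ^ 2)]
  have hI2 : ∀ n, Integrable (fun x => (chi n x * u x) ^ 2) := by
    intro n
    refine hL2.mono' (((hφcont n).pow 2).aestronglyMeasurable) (ae_of_all _ fun x => ?_)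
    rw [Real.norm_eq_abs, abs_of_nonneg (sq_nonneg _)]
    exact hsqle n x
  have hI4 : ∀ n, Integrable (fun x => (chi n x * u x) ^ 4) := by
    intro n
    refine hL4.mono' (((hφcont n).pow 4).aestronglyMeasurable) (ae_of_all _ fun x => ?_)
    rw [Real.norm_eq_abs, abs_of_nonneg (by positivity)]
    exact h4le n x
  have hgb : ∀ n x, gradSq (fun y => chi n y * u y) x ≤ 2 * gradSq u x + 2 * C ^ 2 * u x ^ 2 := by
    intro n x
    have h1 : ‖fderiv ℝ (fun y => chi n y * u y) x‖ ≤ ‖fderiv ℝ u x‖ + C * |u x| := by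
      rw [fderiv_fun_mul ((chi_diff n) x) (hdiff x)]
      refine (norm_add_le _ _).trans ?_
      rw [norm_smul, norm_smul, Real.norm_eq_abs, Real.norm_eq_abs]
      have e1 : |chi n x| * ‖fderiv ℝ u x‖ ≤ 1 * ‖fderiv ℝ u x‖ :=
        mul_le_mul_of_nonneg_right (habs n x) (norm_nonneg _)
      have e2 : |u x| * ‖fderiv ℝ (chi n) x‖ ≤ |u x| * C :=
        mul_le_mul_of_nonneg_left (hC n x) (abs_nonneg _)
      have := add_le_add e1 e2
      linarith [this]
    have h2 : gradSq (fun y => chi n y * u y) x ≤ (‖fderiv ℝ u x‖ + C * |u x|) ^ 2 := by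
      rw [gradSq]
      have := norm_nonneg (fderiv ℝ (fun y => chi n y * u y) x)
      nlinarith [h1]
    have h3 : (‖fderiv ℝ u x‖ + C * |u x|) ^ 2 ≤ 2 * ‖fderiv ℝ u x‖ ^ 2 + 2 * C ^ 2 * u x ^ 2 := by
      nlinarith [sq_abs (u x), sq_nonneg (‖fderiv ℝ u x‖ - C * |u x|)]
    calc gradSq (fun y => chi n y * u y) x ≤ (‖fderiv ℝ u x‖ + C * |u x|) ^ 2 := h2
      _ ≤ 2 * ‖fderiv ℝ u x‖ ^ 2 + 2 * C ^ 2 * u x ^ 2 := h3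
      _ = 2 * gradSq u x + 2 * C ^ 2 * u x ^ 2 := by rw [gradSq]
  have hgmeas : ∀ n, AEStronglyMeasurable (gradSq (fun y => chi n y * u y)) volume := by
    intro n
    exact ((measurable_fderiv ℝ (fun y => chi n y * u y)).norm.pow_const 2).aestronglyMeasurable
  have hbound_int : Integrable (fun x => 2 * gradSq u x + 2 * C ^ 2 * u x ^ 2) :=
    (hgrad.const_mul 2).add (hL2.const_mul (2 * C ^ 2))
  have hIg : ∀ n, Integrable (gradSq (fun y => chi n y * u y)) := by
    intro n
    refine hbound_int.mono' (hgmeas n) (ae_of_all _ fun x => ?_)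
    rw [Real.norm_eq_abs, abs_of_nonneg (sq_nonneg _)]
    exact hgb n x
  -- limits
  have hTm : Tendsto (fun n => ∫ x, (chi n x * u x) ^ 2) atTop (nhds 1) := by
    rw [← hmass]
    refine tendsto_integral_of_dominated_convergence (fun x => u x ^ 2)
      (fun n => ((hφcont n).pow 2).aestronglyMeasurable) hL2
      (fun n => ae_of_all _ fun x => ?_) (ae_of_all _ fun x => ?_)
    · rw [Real.norm_eq_abs, abs_of_nonneg (sq_nonneg _)]; exact hsqle n x
    · refine Tendsto.congr' ?_ tendsto_const_nhds
      filter_upwards [ev_one u x] with n hn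
      rw [chi_one n x hn.le, one_mul]
  have hTQ : Tendsto (fun n => ∫ x, (chi n x * u x) ^ 4) atTop (nhds (∫ x, u x ^ 4)) := by
    refine tendsto_integral_of_dominated_convergence (fun x => u x ^ 4)
      (fun n => ((hφcont n).pow 4).aestronglyMeasurable) hL4
      (fun n => ae_of_all _ fun x => ?_) (ae_of_all _ fun x => ?_)
    · rw [Real.norm_eq_abs, abs_of_nonneg (by positivity)]; exact h4le n x
    · refine Tendsto.congr' ?_ tendsto_const_nhds
      filter_upwards [ev_one u x] with n hn
      rw [chi_one n x hn.le, one_mul]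
  have hTT : Tendsto (fun n => ∫ x, gradSq (fun y => chi n y * u y) x) atTop
      (nhds (∫ x, gradSq u x)) := by
    refine tendsto_integral_of_dominated_convergence
      (fun x => 2 * gradSq u x + 2 * C ^ 2 * u x ^ 2) (fun n => hgmeas n) hbound_int
      (fun n => ae_of_all _ fun x => ?_) (ae_of_all _ fun x => ?_)
    · rw [Real.norm_eq_abs, abs_of_nonneg (sq_nonneg _)]; exact hgb n x
    · refine Tendsto.congr' ?_ tendsto_const_nhds
      filter_upwards [ev_one u x] with n hn
      rw [gradSq, gradSq, (chiMul_eventuallyEq u n x hn).fderiv_eq]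
  -- combined limit
  have hL : Tendsto (fun n => (∫ x, gradSq (fun y => chi n y * u y) x) / (∫ x, (chi n x * u x) ^ 2)
      - a / 2 * ((∫ x, (chi n x * u x) ^ 4) / (∫ x, (chi n x * u x) ^ 2) ^ 2)) atTop
      (nhds ((∫ x, gradSq u x) - a / 2 * (∫ x, u x ^ 4))) := by
    have h1 := (hTT.div hTm one_ne_zero).sub
      (((hTQ.div (hTm.pow 2) (by norm_num)).const_mul (a / 2)))
    simpa using h1
  have hev1 := hL.eventually_lt_const hc
  have hev2 := hTm.eventually_const_lt (by norm_num : (1:ℝ)/2 < 1)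
  obtain ⟨n, hn1, hn2⟩ := (hev2.and hev1).exists
  exact ⟨n, hn1, hn2, hI2 n, hIg n, hI4 n⟩

set_option maxHeartbeats 2000000 in
lemma key (V : E2 → ℝ) (hV0 : ∀ x, 0 ≤ V x)
    (hVloc : ∀ r : ℝ, ∃ C : ℝ, ∀ x : E2, ‖x‖ ≤ r → |V x| ≤ C)
    (a : ℝ) (u : E2 → ℝ) (hu : InH V u) (hmass : (∫ x, u x ^ 2) = 1)
    (hEa : Ea V a u < 0) (r : ℝ) :
    ∃ v, InH V v ∧ (∫ x, v x ^ 2) = 1 ∧ Ea V a v < r := by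
  obtain ⟨⟨hdiff, hL2, hgrad, hL4⟩, hVu⟩ := hu
  have hVterm : 0 ≤ ∫ x, V x * u x ^ 2 :=
    integral_nonneg fun x => mul_nonneg (hV0 x) (sq_nonneg _)
  have hc : (∫ x, gradSq u x) - a / 2 * (∫ x, u x ^ 4) < 0 := by
    rw [Ea] at hEa; linarith
  obtain ⟨n, hm2, hneg, hI2, hIg, hI4⟩ := truncation u hdiff hL2 hgrad hL4 hmass a hc
  set m := ∫ x, (chi n x * u x) ^ 2 with hm
  have hm0 : (0:ℝ) < m := lt_trans (by norm_num) hm2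
  set s : ℝ := (Real.sqrt m)⁻¹ with hsdef
  have hs0 : 0 < s := inv_pos.2 (Real.sqrt_pos.2 hm0)
  have hs2 : s ^ 2 = m⁻¹ := by
    rw [hsdef, inv_pow, Real.sq_sqrt hm0.le]
  set w : E2 → ℝ := fun x => s * (chi n x * u x) with hwdef
  have hφdiff : Differentiable ℝ (fun y => chi n y * u y) := (chi_diff n).mul hdiff
  have hwdiff : Differentiable ℝ w := hφdiff.const_mul s
  have hwcont : Continuous w := hwdiff.continuous
  have hgsw : ∀ x, gradSq w x = s ^ 2 * gradSq (fun y => chi n y * u y) x := by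
    intro x
    rw [gradSq, gradSq, hwdef]
    rw [fderiv_const_mul (hφdiff x) s, norm_smul, Real.norm_eq_abs, mul_pow, sq_abs]
  have hw2 : (∫ x, w x ^ 2) = 1 := by
    have e1 : (fun x => w x ^ 2) = fun x => s ^ 2 * (chi n x * u x) ^ 2 := by
      funext x; rw [hwdef]; ring
    rw [e1, MeasureTheory.integral_const_mul, ← hm, hs2, inv_mul_cancel₀ hm0.ne']
  have hw2int : Integrable (fun x => w x ^ 2) := by
    have e1 : (fun x => w x ^ 2) = fun x => s ^ 2 * (chi n x * u x) ^ 2 := by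
      funext x; rw [hwdef]; ring
    rw [e1]; exact hI2.const_mul _
  have hw4int : Integrable (fun x => w x ^ 4) := by
    have e1 : (fun x => w x ^ 4) = fun x => s ^ 4 * (chi n x * u x) ^ 4 := by
      funext x; rw [hwdef]; ring
    rw [e1]; exact hI4.const_mul _
  have hwgint : Integrable (gradSq w) := by
    rw [show gradSq w = fun x => s ^ 2 * gradSq (fun y => chi n y * u y) x from funext hgsw]
    exact hIg.const_mul _
  have hQw : (∫ x, w x ^ 4) = s ^ 4 * ∫ x, (chi n x * u x) ^ 4 := by
    have e1 : (fun x => w x ^ 4) = fun x => s ^ 4 * (chi n x * u x) ^ 4 := by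
      funext x; rw [hwdef]; ring
    rw [e1, MeasureTheory.integral_const_mul]
  have hTw : (∫ x, gradSq w x) = s ^ 2 * ∫ x, gradSq (fun y => chi n y * u y) x := by
    simp_rw [hgsw]
    rw [MeasureTheory.integral_const_mul]
  set cw : ℝ := (∫ x, gradSq w x) - a / 2 * ∫ x, w x ^ 4 with hcwdef
  have hcw : cw < 0 := by
    rw [hcwdef, hTw, hQw]
    have e2 : s ^ 2 * (∫ x, gradSq (fun y => chi n y * u y) x)
        - a / 2 * (s ^ 4 * ∫ x, (chi n x * u x) ^ 4)
        = (∫ x, gradSq (fun y => chi n y * u y) x) / m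
        - a / 2 * ((∫ x, (chi n x * u x) ^ 4) / m ^ 2) := by
      rw [show s ^ 4 = (s ^ 2) ^ 2 by ring, hs2]
      field_simp
    rw [e2]; exact hneg
  have hwsupp : ∀ x, w x ≠ 0 → ‖x‖ < 2 * ((n:ℝ) + 1) := by
    intro x hx
    have hchi : chi n x ≠ 0 := by
      intro h0; apply hx; rw [hwdef]; simp [h0]
    exact chi_supp hchi
  -- a point where u does not vanish
  have hex : ∃ x : E2, u x ≠ 0 := by
    by_contra h
    push_neg at h
    have : (∫ x : E2, u x ^ 2) = 0 := by
      have : (fun x : E2 => u x ^ 2) = fun _ => (0:ℝ) := funext fun x => by rw [h x]; ring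
      rw [this, integral_zero]
    rw [hmass] at this; norm_num at this
  obtain ⟨x₀, hx₀⟩ := hex
  have hopen : IsOpen {y : E2 | u y ≠ 0} := by
    have : {y : E2 | u y ≠ 0} = u ⁻¹' ({0}ᶜ) := rfl
    rw [this]
    exact hdiff.continuous.isOpen_preimage _ isOpen_compl_singleton
  obtain ⟨ε, hε0, hball⟩ := Metric.isOpen_iff.1 hopen x₀ hx₀
  set ε' : ℝ := ε / 2 with hε'def
  have hε'0 : 0 < ε' := by rw [hε'def]; linarith
  have hε'ball : ∀ y : E2, ‖y - x₀‖ ≤ ε' → u y ≠ 0 := by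
    intro y hy
    apply hball
    rw [Metric.mem_ball, dist_eq_norm]
    rw [hε'def] at hy; linarith
  obtain ⟨CV, hCV⟩ := hVloc (‖x₀‖ + ε')
  have hCV0 : 0 ≤ CV :=
    (abs_nonneg (V x₀)).trans (hCV x₀ (by linarith))
  set R : ℝ := 2 * ((n:ℝ) + 1) with hRdef
  have hR0 : 0 < R := by rw [hRdef]; positivity
  set t : ℝ := max (max 1 ((R + ‖x₀‖) / ε')) (Real.sqrt ((CV - r) / (-cw)) + 1) with htdef
  have ht1 : (1:ℝ) ≤ t := le_trans (le_max_left _ _) (le_max_left _ _)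
  have ht0 : (0:ℝ) < t := lt_of_lt_of_le one_pos ht1
  have htsupp : R + ‖x₀‖ ≤ t * ε' := by
    have h1 : (R + ‖x₀‖) / ε' ≤ t := le_trans (le_max_right _ _) (le_max_left _ _)
    rw [div_le_iff₀ hε'0] at h1
    linarith
  have htE : t ^ 2 * cw + CV < r := by
    have hM : (CV - r) / (-cw) < t ^ 2 := by
      have h1 : Real.sqrt ((CV - r) / (-cw)) + 1 ≤ t := le_max_right _ _
      have h2 : 0 ≤ Real.sqrt ((CV - r) / (-cw)) := Real.sqrt_nonneg _
      rcases le_or_gt 0 ((CV - r) / (-cw)) with hM0 | hM0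
      · nlinarith [Real.sq_sqrt hM0]
      · nlinarith
    have hcw' : (0:ℝ) < -cw := by linarith
    rw [div_lt_iff₀ hcw'] at hM
    nlinarith
  set c0 : E2 := x₀ - t • x₀ with hc0def
  set v : E2 → ℝ := fun x => t * w (c0 + t • x) with hvdef
  have haff : ∀ x : E2, c0 + t • x = x₀ + t • (x - x₀) := by
    intro x
    rw [hc0def, smul_sub]
    abel
  have hvsupp : ∀ x, v x ≠ 0 → ‖x - x₀‖ ≤ ε' ∧ u x ≠ 0 ∧ ‖x‖ ≤ ‖x₀‖ + ε' := by
    intro x hx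
    have hw0 : w (c0 + t • x) ≠ 0 := by
      intro h0; apply hx; rw [hvdef]; simp [h0]
    have h2 : ‖x₀ + t • (x - x₀)‖ < R := by
      rw [← haff x]; rw [← hRdef] at *; exact hwsupp _ hw0
    have h3 : t * ‖x - x₀‖ ≤ R + ‖x₀‖ := by
      have e1 : t • (x - x₀) = (x₀ + t • (x - x₀)) - x₀ := by abel
      have e2 := norm_sub_le (x₀ + t • (x - x₀)) x₀
      rw [← e1] at e2
      have e3 : ‖t • (x - x₀)‖ = t * ‖x - x₀‖ := by
        rw [norm_smul, Real.norm_eq_abs, abs_of_pos ht0]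
      rw [e3] at e2
      linarith
    have h4 : ‖x - x₀‖ ≤ ε' := by
      have := le_trans h3 htsupp
      exact le_of_mul_le_mul_left this ht0
    have h5 : u x ≠ 0 := hε'ball x h4
    have h6 : ‖x‖ ≤ ‖x₀‖ + ε' := by
      have : ‖x‖ ≤ ‖x - x₀‖ + ‖x₀‖ := by
        have := norm_add_le (x - x₀) x₀
        simpa using this
      linarith
    exact ⟨h4, h5, h6⟩
  have hvdiff : Differentiable ℝ v :=
    (hwdiff.comp ((differentiable_id.const_smul t).const_add c0)).const_mul t
  have hvcont : Continuous v := hvdiff.continuous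
  have hgsv : ∀ x, gradSq v x = t ^ 4 * gradSq w (c0 + t • x) := by
    intro x
    have h1 := gradSq_affine_mul w hwdiff c0 ht0 ht0 x
    rw [hvdef]
    rw [h1]
    ring_nf
  have hv2 : (∫ x, v x ^ 2) = 1 := by
    have e1 : (fun x => v x ^ 2) = fun x => t ^ 2 * (fun y => w y ^ 2) (c0 + t • x) := by
      funext x; rw [hvdef]; ring
    rw [e1, MeasureTheory.integral_const_mul, integral_comp_affine (fun y => w y ^ 2) c0 ht0,
      hw2]
    field_simp
  have hv4 : (∫ x, v x ^ 4) = t ^ 2 * ∫ x, w x ^ 4 := by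
    have e1 : (fun x => v x ^ 4) = fun x => t ^ 4 * (fun y => w y ^ 4) (c0 + t • x) := by
      funext x; rw [hvdef]; ring
    rw [e1, MeasureTheory.integral_const_mul, integral_comp_affine (fun y => w y ^ 4) c0 ht0]
    have ht2 : (t:ℝ) ^ 2 ≠ 0 := by positivity
    field_simp
  have hvg : (∫ x, gradSq v x) = t ^ 2 * ∫ x, gradSq w x := by
    simp_rw [hgsv]
    rw [MeasureTheory.integral_const_mul, integral_comp_affine (gradSq w) c0 ht0]
    have ht2 : (t:ℝ) ^ 2 ≠ 0 := by positivity
    field_simp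
  have hvzero : ∀ x ∉ Metric.closedBall x₀ ε', v x = 0 := by
    intro x hx
    by_contra h0
    exact hx (by rw [Metric.mem_closedBall, dist_eq_norm]; exact (hvsupp x h0).1)
  have hvcs : HasCompactSupport v :=
    HasCompactSupport.intro (isCompact_closedBall x₀ ε') hvzero
  have hv2int : Integrable (fun x => v x ^ 2) :=
    (hvcont.pow 2).integrable_of_hasCompactSupport
      (HasCompactSupport.intro (isCompact_closedBall x₀ ε')
        (fun x hx => by rw [Pi.pow_apply, hvzero x hx]; norm_num))
  have hv4int : Integrable (fun x => v x ^ 4) :=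
    (hvcont.pow 4).integrable_of_hasCompactSupport
      (HasCompactSupport.intro (isCompact_closedBall x₀ ε')
        (fun x hx => by rw [Pi.pow_apply, hvzero x hx]; norm_num))
  have hvgint : Integrable (gradSq v) := by
    have h1 : Integrable (fun x => t ^ 4 * gradSq w (c0 + t • x)) :=
      (integrable_comp_affine hwgint c0 ht0).const_mul _
    rw [show gradSq v = fun x => t ^ 4 * gradSq w (c0 + t • x) from funext hgsv]
    exact h1
  have heq : ∀ x, V x * v x ^ 2 = (V x * u x ^ 2) * ((u x ^ 2)⁻¹ * v x ^ 2) := by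
    intro x
    by_cases hvx : v x = 0
    · rw [hvx]; ring
    · have hux : u x ≠ 0 := (hvsupp x hvx).2.1
      field_simp
  have hVv : Integrable (fun x => V x * v x ^ 2) := by
    have hmeas : AEStronglyMeasurable (fun x => V x * v x ^ 2) volume := by
      rw [show (fun x => V x * v x ^ 2)
          = fun x => (V x * u x ^ 2) * ((u x ^ 2)⁻¹ * v x ^ 2) from funext heq]
      exact hVu.aestronglyMeasurable.mul
        (((hdiff.continuous.measurable.pow_const 2).inv.mul
          (hvcont.measurable.pow_const 2)).aestronglyMeasurable)
    refine (hv2int.const_mul CV).mono' hmeas (ae_of_all _ fun x => ?_)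
    by_cases hvx : v x = 0
    · rw [hvx]; simp
    · have hxb : ‖x‖ ≤ ‖x₀‖ + ε' := (hvsupp x hvx).2.2
      rw [Real.norm_eq_abs, abs_mul, abs_of_nonneg (sq_nonneg (v x))]
      exact mul_le_mul_of_nonneg_right (hCV x hxb) (sq_nonneg _)
  have hVvle : (∫ x, V x * v x ^ 2) ≤ CV := by
    have h1 : (∫ x, V x * v x ^ 2) ≤ ∫ x, CV * v x ^ 2 := by
      refine integral_mono hVv (hv2int.const_mul CV) fun x => ?_
      by_cases hvx : v x = 0
      · rw [hvx]; simp
      · have hxb : ‖x‖ ≤ ‖x₀‖ + ε' := (hvsupp x hvx).2.2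
        exact mul_le_mul_of_nonneg_right ((le_abs_self _).trans (hCV x hxb)) (sq_nonneg _)
    rw [MeasureTheory.integral_const_mul, hv2, mul_one] at h1
    exact h1
  refine ⟨v, ⟨⟨hvdiff, hv2int, hvgint, hv4int⟩, hVv⟩, hv2, ?_⟩
  rw [Ea, hvg, hv4]
  have e3 : t ^ 2 * (∫ x, gradSq w x) - a / 2 * (t ^ 2 * ∫ x, w x ^ 4) = t ^ 2 * cw := by
    rw [hcwdef]; ring
  clear_value t cw
  linarith [hVvle, htE]

end Stmt5Aux

theorem stmt5 (V : E2 → ℝ) (hV0 : ∀ x, 0 ≤ V x)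
    (hVloc : ∀ r : ℝ, ∃ C : ℝ, ∀ x : E2, ‖x‖ ≤ r → |V x| ≤ C)
    (a : ℝ) (ha : 0 ≤ a) :
    (0 : EReal) ≤ gpE V a ∨ gpE V a = ⊥ := by
  rcases le_or_gt 0 (gpE V a) with h | h
  · exact Or.inl h
  right
  have h0 : gpE V a < ((0:ℝ) : EReal) := by exact_mod_cast h
  rw [gpE] at h0
  obtain ⟨y, hyS, hy0⟩ := sInf_lt_iff.1 h0
  obtain ⟨u, hu, hmass, rfl⟩ := hyS
  have hEa : Ea V a u < 0 := by exact_mod_cast hy0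
  rw [gpE, sInf_eq_bot]
  intro b hb
  by_cases hbtop : b = ⊤
  · exact ⟨(Ea V a u : EReal), ⟨u, hu, hmass, rfl⟩, hbtop ▸ EReal.coe_lt_top _⟩
  · obtain ⟨v, hv, hvmass, hvlt⟩ := Stmt5Aux.key V hV0 hVloc a u hu hmass hEa b.toReal
    refine ⟨(Ea V a v : EReal), ⟨v, hv, hvmass, rfl⟩, ?_⟩
    rw [← EReal.coe_toReal hbtop hb.ne']
    exact_mod_cast hvlt
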